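/- Exactness of the 3D Poisson-Robin boundary stencil on quartic polynomials: Let u be a polynomial in (x,y,z) of total degree at most 4, f = Δu, σ ∈ ℝ, and g(y,z) = −u_x(0,y,z) + σ u(0,y,z). Then for all h > 0 and all (y,z): (1/(6h²))[u(0,y−h,z−h)+u(0,y−h,z+h)+u(0,y+h,z−h)+u(0,y+h,z+h) + 2(u(0,y−h,z)+u(0,y+h,z)+u(0,y,z−h)+u(0,y,z+h)) − 12(2+σh)·u(0,y,z)/h·h + 2(u(h,y−h,z)+u(h,y+h,z)+u(h,y,z−h)+u(h,y,z+h)) + 4u(h,y,z)] = (1/12)[f(0,y−h,z)+f(0,y+h,z)+f(0,y,z−h)+f(0,y,z+h) + 6f(0,y,z) − f(−h,y,z) + 3f(h,y,z)] − (2/h)g(y,z), where the center α coefficient is −12(2+σ h)/(6h²) (equals −(24+12σh)/(6h²)). -/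

import Mathlib

noncomputable def pdx3 (u : ℝ → ℝ → ℝ → ℝ) : ℝ → ℝ → ℝ → ℝ :=
  fun x y z => deriv (fun s => u s y z) x
noncomputable def pdy3 (u : ℝ → ℝ → ℝ → ℝ) : ℝ → ℝ → ℝ → ℝ :=
  fun x y z => deriv (fun t => u x t z) y
noncomputable def pdz3 (u : ℝ → ℝ → ℝ → ℝ) : ℝ → ℝ → ℝ → ℝ :=
  fun x y z => deriv (fun r => u x y r) z

lemma qd (A B C D E : ℝ) (x : ℝ) :
    deriv (fun s : ℝ => A + B * s + C * s ^ 2 + D * s ^ 3 + E * s ^ 4) x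
      = B + 2 * C * x + 3 * D * x ^ 2 + 4 * E * x ^ 3 := by
  have h : HasDerivAt (fun s : ℝ => A + B * s + C * s ^ 2 + D * s ^ 3 + E * s ^ 4)
      (B + 2 * C * x + 3 * D * x ^ 2 + 4 * E * x ^ 3) x := by
    have h1 : HasDerivAt (fun s : ℝ => s) 1 x := hasDerivAt_id x
    have h2 := hasDerivAt_pow 2 x
    have h3 := hasDerivAt_pow 3 x
    have h4 := hasDerivAt_pow 4 x
    have := ((((hasDerivAt_const x A).add (h1.const_mul B)).add (h2.const_mul C)).add
      (h3.const_mul D)).add (h4.const_mul E)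
    refine HasDerivAt.congr_deriv this ?_
    push_cast
    ring
  exact h.deriv

lemma qd2 (A B C D E : ℝ) (x : ℝ) :
    deriv (deriv (fun s : ℝ => A + B * s + C * s ^ 2 + D * s ^ 3 + E * s ^ 4)) x
      = 2 * C + 6 * D * x + 12 * E * x ^ 2 := by
  have h1 : deriv (fun s : ℝ => A + B * s + C * s ^ 2 + D * s ^ 3 + E * s ^ 4)
      = fun s : ℝ => B + (2 * C) * s + (3 * D) * s ^ 2 + (4 * E) * s ^ 3 + 0 * s ^ 4 := by
    funext s
    rw [qd]
    ring
  rw [h1, qd]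
  ring

lemma slice_x (u : ℝ → ℝ → ℝ → ℝ) (c : ℕ → ℕ → ℕ → ℝ)
    (hu : ∀ x y z : ℝ, u x y z =
      ∑ k₁ ∈ Finset.range 5, ∑ k₂ ∈ Finset.range 5, ∑ k₃ ∈ Finset.range 5,
        if k₁ + k₂ + k₃ ≤ 4 then c k₁ k₂ k₃ * x ^ k₁ * y ^ k₂ * z ^ k₃ else 0) (Y Z : ℝ) :
    (fun s : ℝ => u s Y Z) = (fun s : ℝ =>
      (c 0 0 0 + c 0 0 1 * Z ^ 1 + c 0 0 2 * Z ^ 2 + c 0 0 3 * Z ^ 3 + c 0 0 4 * Z ^ 4 + c 0 1 0 * Y ^ 1 + c 0 1 1 * Y ^ 1 * Z ^ 1 + c 0 1 2 * Y ^ 1 * Z ^ 2 + c 0 1 3 * Y ^ 1 * Z ^ 3 + c 0 2 0 * Y ^ 2 + c 0 2 1 * Y ^ 2 * Z ^ 1 + c 0 2 2 * Y ^ 2 * Z ^ 2 + c 0 3 0 * Y ^ 3 + c 0 3 1 * Y ^ 3 * Z ^ 1 + c 0 4 0 * Y ^ 4) + (c 1 0 0 + c 1 0 1 * Z ^ 1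 + c 1 0 2 * Z ^ 2 + c 1 0 3 * Z ^ 3 + c 1 1 0 * Y ^ 1 + c 1 1 1 * Y ^ 1 * Z ^ 1 + c 1 1 2 * Y ^ 1 * Z ^ 2 + c 1 2 0 * Y ^ 2 + c 1 2 1 * Y ^ 2 * Z ^ 1 + c 1 3 0 * Y ^ 3) * s + (c 2 0 0 + c 2 0 1 * Z ^ 1 + c 2 0 2 * Z ^ 2 + c 2 1 0 * Y ^ 1 + c 2 1 1 * Y ^ 1 * Z ^ 1 + c 2 2 0 * Y ^ 2) * s ^ 2 + (c 3 0 0 + c 3 0 1 * Z ^ 1 + c 3 1 0 * Y ^ 1) * s ^ 3 + (c 4 0 0) * s ^ 4) := by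
  funext s
  rw [hu]
  norm_num [Finset.sum_range_succ]
  ring

lemma slice_y (u : ℝ → ℝ → ℝ → ℝ) (c : ℕ → ℕ → ℕ → ℝ)
    (hu : ∀ x y z : ℝ, u x y z =
      ∑ k₁ ∈ Finset.range 5, ∑ k₂ ∈ Finset.range 5, ∑ k₃ ∈ Finset.range 5,
        if k₁ + k₂ + k₃ ≤ 4 then c k₁ k₂ k₃ * x ^ k₁ * y ^ k₂ * z ^ k₃ else 0) (X Z : ℝ) :
    (fun s : ℝ => u X s Z) = (fun s : ℝ =>
      (c 0 0 0 + c 0 0 1 * Z ^ 1 + c 0 0 2 * Z ^ 2 + c 0 0 3 * Z ^ 3 + c 0 0 4 * Z ^ 4 + c 1 0 0 * X ^ 1 + c 1 0 1 * X ^ 1 * Z ^ 1 + c 1 0 2 * X ^ 1 * Z ^ 2 + c 1 0 3 * X ^ 1 * Z ^ 3 + c 2 0 0 * X ^ 2 + c 2 0 1 * X ^ 2 * Z ^ 1 + c 2 0 2 * X ^ 2 * Z ^ 2 + c 3 0 0 * X ^ 3 + c 3 0 1 * X ^ 3 * Z ^ 1 + c 4 0 0 * X ^ 4) + (c 0 1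 0 + c 0 1 1 * Z ^ 1 + c 0 1 2 * Z ^ 2 + c 0 1 3 * Z ^ 3 + c 1 1 0 * X ^ 1 + c 1 1 1 * X ^ 1 * Z ^ 1 + c 1 1 2 * X ^ 1 * Z ^ 2 + c 2 1 0 * X ^ 2 + c 2 1 1 * X ^ 2 * Z ^ 1 + c 3 1 0 * X ^ 3) * s + (c 0 2 0 + c 0 2 1 * Z ^ 1 + c 0 2 2 * Z ^ 2 + c 1 2 0 * X ^ 1 + c 1 2 1 * X ^ 1 * Z ^ 1 + c 2 2 0 * X ^ 2) * s ^ 2 + (c 0 3 0 + c 0 3 1 * Z ^ 1 + c 1 3 0 * X ^ 1) * s ^ 3 + (c 0 4 0) * s ^ 4) := by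
  funext s
  rw [hu]
  norm_num [Finset.sum_range_succ]
  ring

lemma slice_z (u : ℝ → ℝ → ℝ → ℝ) (c : ℕ → ℕ → ℕ → ℝ)
    (hu : ∀ x y z : ℝ, u x y z =
      ∑ k₁ ∈ Finset.range 5, ∑ k₂ ∈ Finset.range 5, ∑ k₃ ∈ Finset.range 5,
        if k₁ + k₂ + k₃ ≤ 4 then c k₁ k₂ k₃ * x ^ k₁ * y ^ k₂ * z ^ k₃ else 0) (X Y : ℝ) :
    (fun s : ℝ => u X Y s) = (fun s : ℝ =>
      (c 0 0 0 + c 0 1 0 * Y ^ 1 + c 0 2 0 * Y ^ 2 + c 0 3 0 * Y ^ 3 + c 0 4 0 * Y ^ 4 + c 1 0 0 * X ^ 1 + c 1 1 0 * X ^ 1 * Y ^ 1 + c 1 2 0 * X ^ 1 * Y ^ 2 + c 1 3 0 * X ^ 1 * Y ^ 3 + c 2 0 0 * X ^ 2 + c 2 1 0 * X ^ 2 * Y ^ 1 + c 2 2 0 * X ^ 2 * Y ^ 2 + c 3 0 0 * X ^ 3 + c 3 1 0 * X ^ 3 * Y ^ 1 + c 4 0 0 * X ^ 4) + (c 0 0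 1 + c 0 1 1 * Y ^ 1 + c 0 2 1 * Y ^ 2 + c 0 3 1 * Y ^ 3 + c 1 0 1 * X ^ 1 + c 1 1 1 * X ^ 1 * Y ^ 1 + c 1 2 1 * X ^ 1 * Y ^ 2 + c 2 0 1 * X ^ 2 + c 2 1 1 * X ^ 2 * Y ^ 1 + c 3 0 1 * X ^ 3) * s + (c 0 0 2 + c 0 1 2 * Y ^ 1 + c 0 2 2 * Y ^ 2 + c 1 0 2 * X ^ 1 + c 1 1 2 * X ^ 1 * Y ^ 1 + c 2 0 2 * X ^ 2) * s ^ 2 + (c 0 0 3 + c 0 1 3 * Y ^ 1 + c 1 0 3 * X ^ 1) * s ^ 3 + (c 0 0 4) * s ^ 4) := by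
  funext s
  rw [hu]
  norm_num [Finset.sum_range_succ]
  ring

lemma pdxx (u : ℝ → ℝ → ℝ → ℝ) (x Y Z : ℝ) :
    pdx3 (pdx3 u) x Y Z = deriv (deriv (fun t : ℝ => u t Y Z)) x := rfl

lemma pdyy (u : ℝ → ℝ → ℝ → ℝ) (X y Z : ℝ) :
    pdy3 (pdy3 u) X y Z = deriv (deriv (fun t : ℝ => u X t Z)) y := rfl

lemma pdzz (u : ℝ → ℝ → ℝ → ℝ) (X Y z : ℝ) :
    pdz3 (pdz3 u) X Y z = deriv (deriv (fun t : ℝ => u X Y t)) z := rfl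

lemma pdx1 (u : ℝ → ℝ → ℝ → ℝ) (x Y Z : ℝ) :
    pdx3 u x Y Z = deriv (fun t : ℝ => u t Y Z) x := rfl


lemma clear_denoms (A B C h : ℝ) (hne : h ≠ 0) (key : 2 * A = h ^ 2 * B - 24 * h * C) :
    1 / (6 * h ^ 2) * A = 1 / 12 * B - 2 / h * C := by
  field_simp
  linear_combination 6 * key

set_option maxHeartbeats 0 in
/-- Exactness of the 3D Poisson–Robin boundary stencil on polynomials of total degree ≤ 4,
with `f = Δu` and `g(y,z) = −u_x(0,y,z) + σ u(0,y,z)`. -/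
theorem poisson_robin_3d_boundary_stencil_exact (u : ℝ → ℝ → ℝ → ℝ) (c : ℕ → ℕ → ℕ → ℝ)
    (hu : ∀ x y z : ℝ, u x y z =
      ∑ k₁ ∈ Finset.range 5, ∑ k₂ ∈ Finset.range 5, ∑ k₃ ∈ Finset.range 5,
        if k₁ + k₂ + k₃ ≤ 4 then c k₁ k₂ k₃ * x ^ k₁ * y ^ k₂ * z ^ k₃ else 0)
    (σ : ℝ)
    (f : ℝ → ℝ → ℝ → ℝ)
    (hf : ∀ x y z : ℝ, f x y z
        = pdx3 (pdx3 u) x y z + pdy3 (pdy3 u) x y z + pdz3 (pdz3 u) x y z)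
    (g : ℝ → ℝ → ℝ)
    (hg : ∀ y z : ℝ, g y z = -pdx3 u 0 y z + σ * u 0 y z)
    (h : ℝ) (hh : 0 < h) (y z : ℝ) :
    (1 / (6 * h ^ 2)) *
        (u 0 (y - h) (z - h) + u 0 (y - h) (z + h) + u 0 (y + h) (z - h)
          + u 0 (y + h) (z + h)
          + 2 * (u 0 (y - h) z + u 0 (y + h) z + u 0 y (z - h) + u 0 y (z + h))
          - 12 * (2 + σ * h) * u 0 y z
          + 2 * (u h (y - h) z + u h (y + h) z + u h y (z - h) + u h y (z + h))
          + 4 * u h y z)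
      = (1 / 12) *
          (f 0 (y - h) z + f 0 (y + h) z + f 0 y (z - h) + f 0 y (z + h)
            + 6 * f 0 y z - f (-h) y z + 3 * f h y z)
        - (2 / h) * g y z := by
  have hne : h ≠ 0 := ne_of_gt hh
  apply clear_denoms _ _ _ h hne
  rw [hg, pdx1]
  simp only [hf]
  simp only [pdxx, pdyy, pdzz]
  rw [slice_x u c hu (y - h) z, slice_x u c hu (y + h) z, slice_x u c hu y (z - h),
    slice_x u c hu y (z + h), slice_x u c hu y z,
    slice_y u c hu 0 z, slice_y u c hu 0 (z - h), slice_y u c hu 0 (z + h),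
    slice_y u c hu (-h) z, slice_y u c hu h z,
    slice_z u c hu 0 (y - h), slice_z u c hu 0 (y + h), slice_z u c hu 0 y,
    slice_z u c hu (-h) y, slice_z u c hu h y]
  simp only [qd2, qd]
  simp only [hu]
  norm_num [Finset.sum_range_succ]
  ring
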